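/- There exists a constant M > 0 such that for every integer k ≥ 1 and every function φ : [0,1/2] → ℝ that is three times continuously differentiable on [0,1/2], positive on [0,1/2], and satisfies φ'''(η) = 1/φ(η) on [0,1/2], φ(0) = φ(1/2) = 1/k, φ'(0) = 1, one has |φ(η)| ≤ M and |φ'(η)| ≤ M for all η ∈ [0,1/2]. -/

import Mathlib

set_option maxHeartbeats 1000000 in
/-- The uniform `C¹[0,1/2]` bound: there is `M > 0`, independent of `k`, such that every
solution of the approximating problem (1.4) satisfies `|φ| ≤ M` and `|φ'| ≤ M` on `[0,1/2]`. -/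
theorem approximating_solutions_uniform_C1_bound :
    ∃ M > (0:ℝ), ∀ k : ℕ, 1 ≤ k → ∀ φ : ℝ → ℝ,
      ContDiffOn ℝ 3 φ (Set.Icc 0 (1/2)) →
      (∀ η ∈ Set.Icc (0:ℝ) (1/2), 0 < φ η) →
      (∀ η ∈ Set.Icc (0:ℝ) (1/2),
        iteratedDerivWithin 3 φ (Set.Icc 0 (1/2)) η = 1 / φ η) →
      φ 0 = 1 / k → φ (1/2) = 1 / k →
      derivWithin φ (Set.Icc 0 (1/2)) 0 = 1 →
      ∀ η ∈ Set.Icc (0:ℝ) (1/2),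
        |φ η| ≤ M ∧ |derivWithin φ (Set.Icc 0 (1/2)) η| ≤ M := by
  refine ⟨2, by norm_num, ?_⟩
  intro k hk φ hreg hpos hODE hφ0 hφh hφ10 η hη
  set I : Set ℝ := Set.Icc 0 (1/2) with hIdef
  set φ1 : ℝ → ℝ := derivWithin φ I with hφ1def
  set φ2 : ℝ → ℝ := derivWithin φ1 I with hφ2def
  set φ3 : ℝ → ℝ := derivWithin φ2 I with hφ3def
  have h2 : (0:ℝ) < 1/2 := by norm_num
  have h0I : (0:ℝ) ∈ I := Set.left_mem_Icc.2 h2.le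
  have hhI : (1/2:ℝ) ∈ I := Set.right_mem_Icc.2 h2.le
  have hUD : UniqueDiffOn ℝ I := uniqueDiffOn_Icc h2
  have hconv : Convex ℝ I := convex_Icc _ _
  have hint : interior I = Set.Ioo 0 (1/2) := interior_Icc
  have hIx : ∀ x ∈ Set.Ioo (0:ℝ) (1/2), I ∈ nhds x := fun x hx => Icc_mem_nhds hx.1 hx.2
  have hIoosub : Set.Ioo (0:ℝ) (1/2) ⊆ I := Set.Ioo_subset_Icc_self
  have hk1 : (1:ℝ) ≤ (k:ℝ) := by exact_mod_cast hk
  have hkpos : (0:ℝ) < (k:ℝ) := by linarith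
  have hkinv : (0:ℝ) < 1/(k:ℝ) := by positivity
  -- regularity
  have hreg1 : ContDiffOn ℝ 2 φ1 I := hreg.derivWithin hUD (by norm_num)
  have hreg2 : ContDiffOn ℝ 1 φ2 I := hreg1.derivWithin hUD (by norm_num)
  have hφc : ContinuousOn φ I := hreg.continuousOn
  have hφ1c : ContinuousOn φ1 I := hreg1.continuousOn
  have hφ2c : ContinuousOn φ2 I := hreg2.continuousOn
  have hd0 : ∀ x ∈ I, HasDerivWithinAt φ (φ1 x) I x := fun x hx =>
    ((hreg.differentiableOn (by norm_num)) x hx).hasDerivWithinAt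
  have hd1 : ∀ x ∈ I, HasDerivWithinAt φ1 (φ2 x) I x := fun x hx =>
    ((hreg1.differentiableOn (by norm_num)) x hx).hasDerivWithinAt
  have hd2 : ∀ x ∈ I, HasDerivWithinAt φ2 (φ3 x) I x := fun x hx =>
    ((hreg2.differentiableOn (by norm_num)) x hx).hasDerivWithinAt
  -- the third derivative is 1/φ
  have hφ3 : ∀ x ∈ I, φ3 x = 1/φ x := by
    intro x hx
    rw [← hODE x hx]
    rw [show (3:ℕ) = 2 + 1 from rfl, iteratedDerivWithin_succ',
        show (2:ℕ) = 1 + 1 from rfl, iteratedDerivWithin_succ',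
        iteratedDerivWithin_one]
  have hφ3pos : ∀ x ∈ I, 0 < φ3 x := by
    intro x hx; rw [hφ3 x hx]; exact div_pos one_pos (hpos x hx)
  -- deriv = derivWithin on the interior
  have hder0 : ∀ x ∈ Set.Ioo (0:ℝ) (1/2), deriv φ x = φ1 x := fun x hx =>
    (derivWithin_of_mem_nhds (hIx x hx)).symm
  have hder1 : ∀ x ∈ Set.Ioo (0:ℝ) (1/2), deriv φ1 x = φ2 x := fun x hx =>
    (derivWithin_of_mem_nhds (hIx x hx)).symm
  have hder2 : ∀ x ∈ Set.Ioo (0:ℝ) (1/2), deriv φ2 x = φ3 x := fun x hx =>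
    (derivWithin_of_mem_nhds (hIx x hx)).symm
  -- φ2 is strictly monotone
  have hmono2 : StrictMonoOn φ2 I := by
    apply strictMonoOn_of_deriv_pos hconv hφ2c
    intro x hx
    rw [hint] at hx
    rw [hder2 x hx]
    exact hφ3pos x (hIoosub hx)
  -- the first integral (★)
  have hstar : ∀ x ∈ I, φ x * φ2 x - φ1 x * φ1 x / 2 - x = (1/(k:ℝ)) * φ2 0 - 1/2 := by
    have hW : ∀ x ∈ I,
        HasDerivWithinAt (fun y => φ y * φ2 y - φ1 y * φ1 y / 2 - y) ((fun _ => (0:ℝ)) x) I x := by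
      intro x hx
      have h1 : HasDerivWithinAt (fun y => φ y * φ2 y) (φ1 x * φ2 x + φ x * φ3 x) I x :=
        (hd0 x hx).mul (hd2 x hx)
      have h2' : HasDerivWithinAt (fun y => φ1 y * φ1 y / 2)
          ((φ2 x * φ1 x + φ1 x * φ2 x) / 2) I x := ((hd1 x hx).mul (hd1 x hx)).div_const 2
      have h4 := (h1.sub h2').sub (hasDerivWithinAt_id x I)
      refine h4.congr_deriv ?_
      rw [hφ3 x hx]
      have hne := (hpos x hx).ne'
      field_simp
      ring
    intro x hx
    have hb := hconv.norm_image_sub_le_of_norm_hasDerivWithin_le (C := 0) hW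
      (fun y _ => by simp) h0I hx
    have h9 : φ x * φ2 x - φ1 x * φ1 x / 2 - x - (φ 0 * φ2 0 - φ1 0 * φ1 0 / 2) = 0 := by
      simpa using hb
    rw [hφ0, hφ10] at h9
    have hfin : (1:ℝ) * 1 / 2 = 1/2 := by norm_num
    nlinarith [h9]
  -- A < 0
  have hAneg : φ2 0 < 0 := by
    by_contra hA
    push_neg at hA
    have hmono1 : MonotoneOn φ1 I := by
      apply monotoneOn_of_deriv_nonneg hconv hφ1c
      · exact (hreg1.differentiableOn (by norm_num)).mono interior_subset
      · intro x hx
        rw [hint] at hx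
        rw [hder1 x hx]
        exact le_of_lt (lt_of_le_of_lt hA (hmono2 h0I (hIoosub hx) hx.1))
    obtain ⟨c, hc, hcs⟩ := exists_hasDerivAt_eq_slope φ φ1 h2 hφc
      (fun x hx => (hd0 x (hIoosub hx)).hasDerivAt (hIx x hx))
    have h1c : (1:ℝ) ≤ φ1 c := hφ10 ▸ hmono1 h0I (hIoosub hc) hc.1.le
    rw [hφh, hφ0] at hcs
    simp at hcs
    linarith
  -- φ ≥ 1/k on I
  have hlow : ∀ x ∈ I, 1/(k:ℝ) ≤ φ x := by
    obtain ⟨β, hβ, hβmin⟩ := isCompact_Icc.exists_isMinOn ⟨0, h0I⟩ hφc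
    have hβmin' : ∀ y ∈ I, φ β ≤ φ y := fun y hy => hβmin hy
    by_contra hcon
    push_neg at hcon
    obtain ⟨x, hx, hxlt⟩ := hcon
    have hβlt : φ β < 1/(k:ℝ) := lt_of_le_of_lt (hβmin' x hx) hxlt
    have hβIoo : β ∈ Set.Ioo (0:ℝ) (1/2) := by
      rcases hβ.1.lt_or_eq with h | h
      · rcases hβ.2.lt_or_eq with h' | h'
        · exact ⟨h, h'⟩
        · exact absurd (h' ▸ hφh ▸ hβlt) (lt_irrefl _)
      · exact absurd ((h.symm : β = 0) ▸ hφ0 ▸ hβlt) (lt_irrefl _)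
    have hφ1β : φ1 β = 0 := by
      have hloc : IsLocalMin φ β := hβmin.isLocalMin (hIx β hβIoo)
      rw [← hder0 β hβIoo]
      exact hloc.deriv_eq_zero
    have hφ2β : φ2 β < 0 := by
      have hs := hstar β hβ
      rw [hφ1β] at hs
      have hrhs : φ β * φ2 β = (1/(k:ℝ)) * φ2 0 - 1/2 + β := by linarith
      have hneg : φ β * φ2 β < 0 := by
        rw [hrhs]
        have : (1/(k:ℝ)) * φ2 0 < 0 := mul_neg_of_pos_of_neg hkinv hAneg
        have hβh : β < 1/2 := hβIoo.2
        linarith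
      by_contra hge
      push_neg at hge
      nlinarith [hpos β hβ]
    -- φ2 is negative near β, so φ is strictly increasing just left of β: contradiction
    have hev : ∀ᶠ y in nhds β, y ∈ I → φ2 y < 0 := by
      have htend : Filter.Tendsto φ2 (nhdsWithin β I) (nhds (φ2 β)) := hφ2c β hβ
      have := htend.eventually_lt_const hφ2β
      rwa [eventually_nhdsWithin_iff] at this
    obtain ⟨δ, hδpos, hδ⟩ := Metric.eventually_nhds_iff.1 hev
    set a : ℝ := max (β/2) (β - δ/2) with hadef
    have ha0 : 0 < a := lt_of_lt_of_le (half_pos hβIoo.1) (le_max_left _ _)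
    have haβ : a < β := by
      apply max_lt
      · linarith [hβIoo.1]
      · linarith
    have haI : a ∈ I := ⟨ha0.le, le_trans haβ.le hβ.2⟩
    have hsub : Set.Icc a β ⊆ I := Set.Icc_subset_Icc ha0.le hβ.2
    have hneg2 : ∀ y ∈ Set.Icc a β, φ2 y < 0 := by
      intro y hy
      refine hδ ?_ (hsub hy)
      rw [Real.dist_eq, abs_of_nonpos (by linarith [hy.2])]
      have : β - δ/2 ≤ a := le_max_right _ _
      have : β - δ/2 ≤ y := le_trans this hy.1
      linarith
    have hanti : StrictAntiOn φ1 (Set.Icc a β) := by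
      apply strictAntiOn_of_deriv_neg (convex_Icc _ _) (hφ1c.mono hsub)
      intro y hy
      rw [interior_Icc] at hy
      have hyIoo : y ∈ Set.Ioo (0:ℝ) (1/2) := ⟨lt_trans ha0 hy.1, lt_of_lt_of_le hy.2 hβ.2⟩
      rw [hder1 y hyIoo]
      exact hneg2 y ⟨hy.1.le, hy.2.le⟩
    have hφ1pos : ∀ y ∈ Set.Ioo a β, 0 < φ1 y := by
      intro y hy
      have : φ1 y > φ1 β := hanti ⟨hy.1.le, hy.2.le⟩ ⟨haβ.le, le_refl β⟩ hy.2
      rwa [hφ1β] at this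
    have hmonoφ : StrictMonoOn φ (Set.Icc a β) := by
      apply strictMonoOn_of_deriv_pos (convex_Icc _ _) (hφc.mono hsub)
      intro y hy
      rw [interior_Icc] at hy
      have hyIoo : y ∈ Set.Ioo (0:ℝ) (1/2) := ⟨lt_trans ha0 hy.1, lt_of_lt_of_le hy.2 hβ.2⟩
      rw [hder0 y hyIoo]
      exact hφ1pos y hy
    have : φ a < φ β := hmonoφ ⟨le_refl a, haβ.le⟩ ⟨haβ.le, le_refl β⟩ haβ
    exact absurd (hβmin' a haI) (not_le.2 this)
  -- B - A ≤ k/2  (mean value theorem for φ2)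
  have hBA : φ2 (1/2) - φ2 0 ≤ (k:ℝ)/2 := by
    obtain ⟨c, hc, hcs⟩ := exists_hasDerivAt_eq_slope φ2 φ3 h2 hφ2c
      (fun x hx => (hd2 x (hIoosub hx)).hasDerivAt (hIx x hx))
    have hcI : c ∈ I := hIoosub hc
    have h1 : φ3 c ≤ (k:ℝ) := by
      rw [hφ3 c hcI]
      rw [div_le_iff₀ (hpos c hcI)]
      have hlc := hlow c hcI
      have h6 : (k:ℝ) * (1/(k:ℝ)) ≤ (k:ℝ) * φ c := mul_le_mul_of_nonneg_left hlc hkpos.le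
      have h7 : (k:ℝ) * (1/(k:ℝ)) = 1 := by field_simp
      linarith
    have : φ2 (1/2) - φ2 0 = φ3 c * (1/2) := by
      rw [hcs]; ring
    rw [this]
    linarith
  have hBApos : 0 ≤ φ2 (1/2) - φ2 0 := by
    have := hmono2 h0I hhI h2
    linarith
  -- |D| ≤ 1
  have hD2 : φ1 (1/2) * φ1 (1/2) ≤ 1 := by
    have hs0 := hstar (1/2) hhI
    rw [hφh] at hs0
    have hBAk : (1/(k:ℝ)) * (φ2 (1/2) - φ2 0) ≤ (1/(k:ℝ)) * ((k:ℝ)/2) :=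
      mul_le_mul_of_nonneg_left hBA hkinv.le
    have ht2 : (1/(k:ℝ)) * ((k:ℝ)/2) = 1/2 := by field_simp
    nlinarith [hs0, hBAk, ht2]
  have hDlow : -1 ≤ φ1 (1/2) := by nlinarith
  have hDup : φ1 (1/2) ≤ 1 := by nlinarith
  -- |φ1| ≤ 2 on I
  have hφ1bound : ∀ x ∈ I, |φ1 x| ≤ 2 := by
    rcases le_or_gt (φ2 (1/2)) 0 with hB | hB
    · -- φ2 ≤ 0 everywhere, so φ1 is antitone: φ1 ∈ [D, 1]
      have hφ2np : ∀ x ∈ I, φ2 x ≤ 0 := by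
        intro x hx
        rcases hx.2.lt_or_eq with h | h
        · exact le_of_lt (lt_of_lt_of_le (hmono2 hx hhI h) hB)
        · rw [h]; exact hB
      have hant : AntitoneOn φ1 I := by
        apply antitoneOn_of_deriv_nonpos hconv hφ1c
        · exact (hreg1.differentiableOn (by norm_num)).mono interior_subset
        · intro x hx
          rw [hint] at hx
          rw [hder1 x hx]
          exact hφ2np x (hIoosub hx)
      intro x hx
      have hup : φ1 x ≤ 1 := hφ10 ▸ hant h0I hx hx.1
      have hlo : φ1 (1/2) ≤ φ1 x := hant hx hhI hx.2
      rw [abs_le]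
      constructor <;> linarith
    · -- B > 0, hence -A ≤ k/2; interior extrema of φ1 satisfy φ1² ≤ 2
      have hAk : -(φ2 0) ≤ (k:ℝ)/2 := by linarith
      have hcrit : ∀ γ ∈ Set.Ioo (0:ℝ) (1/2), φ2 γ = 0 → φ1 γ * φ1 γ ≤ 2 := by
        intro γ hγ hz
        have hs := hstar γ (hIoosub hγ)
        rw [hz, mul_zero] at hs
        have ht : (1/(k:ℝ)) * (-(φ2 0)) ≤ (1/(k:ℝ)) * ((k:ℝ)/2) :=
          mul_le_mul_of_nonneg_left hAk hkinv.le
        have ht2 : (1/(k:ℝ)) * ((k:ℝ)/2) = 1/2 := by field_simp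
        have h5 : 0 ≤ γ := hγ.1.le
        nlinarith [hs, ht, ht2, h5]
      obtain ⟨m, hm, hmmin⟩ := isCompact_Icc.exists_isMinOn ⟨0, h0I⟩ hφ1c
      obtain ⟨M₁, hM₁, hMmax⟩ := isCompact_Icc.exists_isMaxOn ⟨0, h0I⟩ hφ1c
      have hextr : ∀ γ ∈ I, (IsLocalMin φ1 γ ∨ IsLocalMax φ1 γ) → γ ∈ Set.Ioo (0:ℝ) (1/2) →
          φ1 γ * φ1 γ ≤ 2 := by
        intro γ hγ hloc hγIoo
        apply hcrit γ hγIoo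
        rw [← hder1 γ hγIoo]
        rcases hloc with h | h
        · exact h.deriv_eq_zero
        · exact h.deriv_eq_zero
      have hmlow : -2 ≤ φ1 m := by
        by_cases hmi : m ∈ Set.Ioo (0:ℝ) (1/2)
        · have := hextr m hm (Or.inl (hmmin.isLocalMin (hIx m hmi))) hmi
          nlinarith
        · have : m = 0 ∨ m = 1/2 := by
            rcases hm.1.lt_or_eq with h | h
            · rcases hm.2.lt_or_eq with h' | h'
              · exact absurd ⟨h, h'⟩ hmi
              · exact Or.inr h'
            · exact Or.inl h.symm
          rcases this with h | h
          · rw [h, hφ10]; norm_num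
          · rw [h]; linarith
      have hMup : φ1 M₁ ≤ 2 := by
        by_cases hmi : M₁ ∈ Set.Ioo (0:ℝ) (1/2)
        · have := hextr M₁ hM₁ (Or.inr (hMmax.isLocalMax (hIx M₁ hmi))) hmi
          nlinarith
        · have : M₁ = 0 ∨ M₁ = 1/2 := by
            rcases hM₁.1.lt_or_eq with h | h
            · rcases hM₁.2.lt_or_eq with h' | h'
              · exact absurd ⟨h, h'⟩ hmi
              · exact Or.inr h'
            · exact Or.inl h.symm
          rcases this with h | h
          · rw [h, hφ10]; norm_num
          · rw [h]; linarith
      intro x hx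
      rw [abs_le]
      exact ⟨by linarith [isMinOn_iff.1 hmmin x hx], by linarith [isMaxOn_iff.1 hMmax x hx]⟩
  -- conclusion
  constructor
  · -- |φ η| ≤ 2
    have hup : φ η ≤ 2 := by
      rcases hη.1.lt_or_eq with h0 | h0
      · obtain ⟨c, hc, hcs⟩ := exists_hasDerivAt_eq_slope φ φ1 h0
          (hφc.mono (Set.Icc_subset_Icc le_rfl hη.2))
          (fun x hx => (hd0 x (hIoosub ⟨hx.1, lt_of_lt_of_le hx.2 hη.2⟩)).hasDerivAt
            (hIx x ⟨hx.1, lt_of_lt_of_le hx.2 hη.2⟩))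
        have hcI : c ∈ I := hIoosub ⟨hc.1, lt_of_lt_of_le hc.2 hη.2⟩
        have habs : |φ1 c| ≤ 2 := hφ1bound c hcI
        have hφη : φ η = φ 0 + η * φ1 c := by
          rw [hcs]
          field_simp
          ring
        rw [hφη, hφ0]
        have h1k : 1/(k:ℝ) ≤ 1 := by
          rw [div_le_one hkpos]; exact hk1
        have : η * φ1 c ≤ 1 := by
          have h2' : φ1 c ≤ 2 := (abs_le.1 habs).2
          nlinarith [hη.1, hη.2, (abs_le.1 habs).1]
        linarith
      · rw [← h0, hφ0]
        have : 1/(k:ℝ) ≤ 1 := by rw [div_le_one hkpos]; exact hk1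
        linarith
    rw [abs_of_pos (hpos η hη)]
    exact hup
  · exact hφ1bound η hη
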